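/- Let M₁ ∈ F^{I₁×I₁} and M₂ ∈ F^{I₂×I₂} satisfy M₁ᵀ Aᵢ = Aᵢ M₂ for i = 1,…,K, with M₁ = S₁ Bdiag(λ₁ I_{L₁₁},…,λ_R I_{L₁R}) S₁⁻¹ and M₂ = S₂ Bdiag(λ₁ I_{L₂₁},…,λ_R I_{L₂R}) S₂⁻¹ for distinct scalars λ₁,…,λ_R. Then, writing X^{(1)} = S₁⁻ᵀ = [X₁^{(1)} … X_R^{(1)}] and X^{(2)} = S₂⁻ᵀ = [X₁^{(2)} … X_R^{(2)}] partitioned conformally, there exist matrices D_{i,r} ∈ F^{L₁r×L₂r} such that Aᵢ = Σ_r X_r^{(1)} D_{i,r} (X_r^{(2)})ᵀ and Bᵢ := M₁ᵀ Aᵢ = Σ_r λ_r X_r^{(1)} D_{i,r} (X_r^{(2)})ᵀ for all i, i.e., the slices Bᵢ are generated by the same low-rank terms as Aᵢ, scaled by λ_r. -/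

import Mathlib

open Matrix

lemma bd_eq_diag18 {R : ℕ} (L : Fin R → ℕ) (lam : Fin R → ℂ) :
    Matrix.blockDiagonal' (fun r => lam r • (1 : Matrix (Fin (L r)) (Fin (L r)) ℂ))
    = Matrix.diagonal (fun p => lam p.1) := by
  ext ⟨r,a⟩ ⟨s,b⟩
  rw [blockDiagonal'_apply]
  by_cases h : r = s
  · subst h
    simp [diagonal, one_apply, Sigma.ext_iff]
  · simp [h, diagonal, Sigma.ext_iff]

lemma helper18 {R I₁ I₂ : ℕ} {L₁ L₂ : Fin R → ℕ}
    (S₁' : Matrix ((r : Fin R) × Fin (L₁ r)) (Fin I₁) ℂ)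
    (S₂' : Matrix ((r : Fin R) × Fin (L₂ r)) (Fin I₂) ℂ)
    (E : Matrix ((r : Fin R) × Fin (L₁ r)) ((r : Fin R) × Fin (L₂ r)) ℂ)
    (hE : ∀ r a s b, r ≠ s → E ⟨r,a⟩ ⟨s,b⟩ = 0) :
    S₁'ᵀ * E * S₂' = ∑ r : Fin R,
      (Matrix.of fun i₁ (j : Fin (L₁ r)) => S₁'ᵀ i₁ ⟨r, j⟩) *
        (Matrix.of fun (a : Fin (L₁ r)) (b : Fin (L₂ r)) => E ⟨r,a⟩ ⟨r,b⟩) *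
        (Matrix.of fun i₂ (j : Fin (L₂ r)) => S₂'ᵀ i₂ ⟨r, j⟩)ᵀ := by
  ext i₁ i₂
  simp only [Matrix.sum_apply, mul_apply, transpose_apply, of_apply]
  rw [← Finset.univ_sigma_univ, Finset.sum_sigma]
  refine Finset.sum_congr rfl (fun s _ => Finset.sum_congr rfl (fun b _ => ?_))
  congr 1
  rw [← Finset.univ_sigma_univ, Finset.sum_sigma]
  rw [Finset.sum_eq_single s]
  · intro r _ hr
    apply Finset.sum_eq_zero
    intro a _
    rw [hE r a s b hr, mul_zero]
  · simp


/-- If `M₁ᵀ Aᵢ = Aᵢ M₂` with `M₁ = S₁ Bdiag(λ₁I,…,λ_R I) S₁⁻¹` and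
`M₂ = S₂ Bdiag(λ₁I,…,λ_R I) S₂⁻¹` for distinct scalars `λ_r`, then with
`X^{(n)} = S_n⁻ᵀ` partitioned conformally into blocks `X_r^{(n)}`, there are
matrices `D_{i,r}` with `Aᵢ = Σ_r X_r^{(1)} D_{i,r} X_r^{(2)ᵀ}` and
`M₁ᵀ Aᵢ = Σ_r λ_r X_r^{(1)} D_{i,r} X_r^{(2)ᵀ}`. -/
theorem stmt_18 {R I₁ I₂ K : ℕ} (L₁ L₂ : Fin R → ℕ) (lam : Fin R → ℂ)
    (hdist : Function.Injective lam)
    (S₁ : Matrix (Fin I₁) ((r : Fin R) × Fin (L₁ r)) ℂ)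
    (S₁' : Matrix ((r : Fin R) × Fin (L₁ r)) (Fin I₁) ℂ)
    (h₁ : S₁ * S₁' = 1) (h₁' : S₁' * S₁ = 1)
    (S₂ : Matrix (Fin I₂) ((r : Fin R) × Fin (L₂ r)) ℂ)
    (S₂' : Matrix ((r : Fin R) × Fin (L₂ r)) (Fin I₂) ℂ)
    (h₂ : S₂ * S₂' = 1) (h₂' : S₂' * S₂ = 1)
    (M₁ : Matrix (Fin I₁) (Fin I₁) ℂ)
    (hM₁ : M₁ = S₁ * Matrix.blockDiagonal'
      (fun r => lam r • (1 : Matrix (Fin (L₁ r)) (Fin (L₁ r)) ℂ)) * S₁')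
    (M₂ : Matrix (Fin I₂) (Fin I₂) ℂ)
    (hM₂ : M₂ = S₂ * Matrix.blockDiagonal'
      (fun r => lam r • (1 : Matrix (Fin (L₂ r)) (Fin (L₂ r)) ℂ)) * S₂')
    (A : Fin K → Matrix (Fin I₁) (Fin I₂) ℂ)
    (hA : ∀ i, M₁ᵀ * A i = A i * M₂) :
    -- the blocks of X^{(1)} = S₁⁻ᵀ = S₁'ᵀ and X^{(2)} = S₂⁻ᵀ = S₂'ᵀ
    ∃ D : Fin K → ∀ r, Matrix (Fin (L₁ r)) (Fin (L₂ r)) ℂ,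
      ∀ i : Fin K,
        A i = ∑ r : Fin R,
          (Matrix.of fun i₁ (j : Fin (L₁ r)) => S₁'ᵀ i₁ ⟨r, j⟩) * D i r *
            (Matrix.of fun i₂ (j : Fin (L₂ r)) => S₂'ᵀ i₂ ⟨r, j⟩)ᵀ ∧
        M₁ᵀ * A i = ∑ r : Fin R,
          lam r • ((Matrix.of fun i₁ (j : Fin (L₁ r)) => S₁'ᵀ i₁ ⟨r, j⟩) * D i r *
            (Matrix.of fun i₂ (j : Fin (L₂ r)) => S₂'ᵀ i₂ ⟨r, j⟩)ᵀ) := by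
  rw [bd_eq_diag18 L₁ lam] at hM₁
  rw [bd_eq_diag18 L₂ lam] at hM₂
  set C : Fin K → Matrix ((r : Fin R) × Fin (L₁ r)) ((r : Fin R) × Fin (L₂ r)) ℂ :=
    fun i => S₁ᵀ * A i * S₂ with hCdef
  -- transposed inverse identities
  have h₁t : S₁ᵀ * S₁'ᵀ = 1 := by rw [← transpose_mul, h₁', transpose_one]
  have h₁t' : S₁'ᵀ * S₁ᵀ = 1 := by rw [← transpose_mul, h₁, transpose_one]
  -- key relation: diagonal * C = C * diagonal
  have hM₁t : M₁ᵀ = S₁'ᵀ * Matrix.diagonal (fun p : (r : Fin R) × Fin (L₁ r) => lam p.1) * S₁ᵀ := by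
    rw [hM₁]; simp [transpose_mul, Matrix.mul_assoc, diagonal_transpose]
  have hC : ∀ i, Matrix.diagonal (fun p : (r : Fin R) × Fin (L₁ r) => lam p.1) * C i
      = C i * Matrix.diagonal (fun p : (r : Fin R) × Fin (L₂ r) => lam p.1) := by
    intro i
    have e1 : S₁ᵀ * (M₁ᵀ * A i) * S₂ = Matrix.diagonal (fun p : (r : Fin R) × Fin (L₁ r) => lam p.1) * C i := by
      rw [hM₁t, hCdef]
      rw [show S₁ᵀ * (S₁'ᵀ * Matrix.diagonal (fun p : (r : Fin R) × Fin (L₁ r) => lam p.1) * S₁ᵀ * A i) * S₂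
        = (S₁ᵀ * S₁'ᵀ) * Matrix.diagonal (fun p => lam p.1) * (S₁ᵀ * A i * S₂) by
          simp [Matrix.mul_assoc], h₁t, Matrix.one_mul]
    have e2 : S₁ᵀ * (A i * M₂) * S₂ = C i * Matrix.diagonal (fun p : (r : Fin R) × Fin (L₂ r) => lam p.1) := by
      rw [hM₂, hCdef]
      rw [show S₁ᵀ * (A i * (S₂ * Matrix.diagonal (fun p : (r : Fin R) × Fin (L₂ r) => lam p.1) * S₂')) * S₂
        = (S₁ᵀ * A i * S₂) * Matrix.diagonal (fun p : (r : Fin R) × Fin (L₂ r) => lam p.1) * (S₂' * S₂) by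
          simp [Matrix.mul_assoc], h₂', Matrix.mul_one]
    rw [← e1, ← e2, hA i]
  -- off-diagonal blocks of C vanish
  have hCoff : ∀ i r a s b, r ≠ s → C i ⟨r,a⟩ ⟨s,b⟩ = 0 := by
    intro i r a s b hrs
    have := congrFun (congrFun (hC i) ⟨r,a⟩) ⟨s,b⟩
    rw [diagonal_mul, mul_diagonal] at this
    have hne : lam r ≠ lam s := fun h => hrs (hdist h)
    have : (lam r - lam s) * C i ⟨r,a⟩ ⟨s,b⟩ = 0 := by
      simp only at this; ring_nf; linear_combination this
    rcases mul_eq_zero.mp this with h | h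
    · exact absurd (sub_eq_zero.mp h) hne
    · exact h
  refine ⟨fun i r => Matrix.of (fun a b => C i ⟨r,a⟩ ⟨r,b⟩), fun i => ⟨?_, ?_⟩⟩
  · have hAeq : A i = S₁'ᵀ * C i * S₂' := by
      rw [hCdef]
      rw [show S₁'ᵀ * (S₁ᵀ * A i * S₂) * S₂' = (S₁'ᵀ * S₁ᵀ) * A i * (S₂ * S₂') by
        simp [Matrix.mul_assoc], h₁t', h₂, Matrix.one_mul, Matrix.mul_one]
    rw [hAeq, helper18 S₁' S₂' (C i) (hCoff i)]
  · have hMAeq : M₁ᵀ * A i = S₁'ᵀ * (Matrix.diagonal (fun p : (r : Fin R) × Fin (L₁ r) => lam p.1) * C i) * S₂' := by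
      rw [hM₁t, hCdef]
      rw [show S₁'ᵀ * (Matrix.diagonal (fun p : (r : Fin R) × Fin (L₁ r) => lam p.1) * (S₁ᵀ * A i * S₂)) * S₂'
        = S₁'ᵀ * Matrix.diagonal (fun p : (r : Fin R) × Fin (L₁ r) => lam p.1) * S₁ᵀ * A i * (S₂ * S₂') by simp [Matrix.mul_assoc],
        h₂, Matrix.mul_one]
    have hoff' : ∀ r a s b, r ≠ s →
        (Matrix.diagonal (fun p : (r : Fin R) × Fin (L₁ r) => lam p.1) * C i) ⟨r,a⟩ ⟨s,b⟩ = 0 := by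
      intro r a s b hrs
      rw [diagonal_mul, hCoff i r a s b hrs, mul_zero]
    rw [hMAeq, helper18 S₁' S₂' _ hoff']
    refine Finset.sum_congr rfl (fun r _ => ?_)
    have : (Matrix.of fun (a : Fin (L₁ r)) (b : Fin (L₂ r)) =>
        (Matrix.diagonal (fun p : (r : Fin R) × Fin (L₁ r) => lam p.1) * C i) ⟨r,a⟩ ⟨r,b⟩)
        = lam r • (Matrix.of fun a b => C i ⟨r,a⟩ ⟨r,b⟩) := by
      ext a b
      rw [of_apply, diagonal_mul]
      simp
    rw [this, Matrix.mul_smul, Matrix.smul_mul]
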